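/- arXiv:2209.06403 — 7 statements merged into one kernel-verified Lean document; each statement's English description precedes it below -/
import Mathlib

section
/- Let T be a Lie triple system, V a vector space, and θ ∈ Z³(T,V) a cocycle. Then the annihilator of the extension T_θ = T ⊕ V equals (Rad(θ) ∩ Ann(T)) ⊕ V, where Rad(θ) = {x ∈ T : θ(x,T,T) = 0}. -/
structure LTS (F : Type*) [Field F] (T : Type*) [AddCommGroup T] [Module F T] where
  br : T → T → T → T
  add₁ : ∀ a b y z, br (a + b) y z = br a y z + br b y z
  smul₁ : ∀ (c : F) (a y z : T), br (c • a) y z = c • br a y z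
  add₂ : ∀ x a b z, br x (a + b) z = br x a z + br x b z
  smul₂ : ∀ (c : F) (x a z : T), br x (c • a) z = c • br x a z
  add₃ : ∀ x y a b, br x y (a + b) = br x y a + br x y b
  smul₃ : ∀ (c : F) (x y a : T), br x y (c • a) = c • br x y a
  A1 : ∀ x y z, br x y z + br y x z = 0
  A2 : ∀ x y z, br x y z + br y z x + br z x y = 0
  A3 : ∀ u v x y z, br u v (br x y z) = br (br u v x) y z + br x (br u v y) z + br x y (br u v z)

/-- A trilinear map between modules. -/
def Trilinear (F : Type*) [Field F] {T V : Type*} [AddCommGroup T] [Module F T]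
    [AddCommGroup V] [Module F V] (θ : T → T → T → V) : Prop :=
  (∀ a b y z, θ (a + b) y z = θ a y z + θ b y z) ∧
  (∀ (c : F) (a y z : T), θ (c • a) y z = c • θ a y z) ∧
  (∀ x a b z, θ x (a + b) z = θ x a z + θ x b z) ∧
  (∀ (c : F) (x a z : T), θ x (c • a) z = c • θ x a z) ∧
  (∀ x y a b, θ x y (a + b) = θ x y a + θ x y b) ∧
  (∀ (c : F) (x y a : T), θ x y (c • a) = c • θ x y a)

/-- A cocycle: a trilinear map satisfying (B1)–(B3). -/
def IsCocycle (F : Type*) [Field F] {T V : Type*} [AddCommGroup T] [Module F T]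
    [AddCommGroup V] [Module F V] (L : LTS F T) (θ : T → T → T → V) : Prop :=
  Trilinear F θ ∧
  (∀ x y z, θ x y z + θ y x z = 0) ∧
  (∀ x y z, θ x y z + θ y z x + θ z x y = 0) ∧
  (∀ u v x y z,
    θ u v (L.br x y z) + θ (L.br v u x) y z + θ x (L.br v u y) z + θ x y (L.br v u z) = 0)

/-- The bracket of the annihilator extension `T ⊕ V`. -/
def extBr (F : Type*) [Field F] {T V : Type*} [AddCommGroup T] [Module F T]
    [AddCommGroup V] [Module F V] (L : LTS F T) (θ : T → T → T → V) :
    T × V → T × V → T × V → T × V :=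
  fun p q r => (L.br p.1 q.1 r.1, θ p.1 q.1 r.1)

/-- The annihilator of a Lie triple system, as a set. -/
def AnnSet (F : Type*) [Field F] {T : Type*} [AddCommGroup T] [Module F T]
    (L : LTS F T) : Set T :=
  {x | ∀ y z, L.br x y z = 0}

/-- The radical of a trilinear map. -/
def RadSet (F : Type*) [Field F] {T V : Type*} [AddCommGroup T] [Module F T]
    [AddCommGroup V] [Module F V] (θ : T → T → T → V) : Set T :=
  {x | ∀ y z, θ x y z = 0}

/-- The lower central series `T⁽⁰⁾ = T`, `T⁽ⁿ⁺¹⁾ = [T⁽ⁿ⁾, T, T]`. -/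
def derSeq (F : Type*) [Field F] {T : Type*} [AddCommGroup T] [Module F T]
    (L : LTS F T) : ℕ → Submodule F T
  | 0 => ⊤
  | n + 1 => Submodule.span F {w | ∃ a ∈ derSeq F L n, ∃ y z : T, w = L.br a y z}

/-- A Lie triple system is nilpotent if its lower central series terminates. -/
def IsNilpotentLTS (F : Type*) [Field F] {T : Type*} [AddCommGroup T] [Module F T]
    (L : LTS F T) : Prop :=
  ∃ m, derSeq F L m = ⊥

/-- Isomorphism of Lie triple systems. -/
def LTSIso (F : Type*) [Field F] {T₁ T₂ : Type*} [AddCommGroup T₁] [Module F T₁]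
    [AddCommGroup T₂] [Module F T₂] (L₁ : LTS F T₁) (L₂ : LTS F T₂) : Prop :=
  ∃ e : T₁ ≃ₗ[F] T₂, ∀ x y z, e (L₁.br x y z) = L₂.br (e x) (e y) (e z)

/-- A coboundary: a map of the form `δf(x,y,z) = f([x,y,z])`. -/
def IsCoboundary (F : Type*) [Field F] {T V : Type*} [AddCommGroup T] [Module F T]
    [AddCommGroup V] [Module F V] (L : LTS F T) (θ : T → T → T → V) : Prop :=
  ∃ f : T →ₗ[F] V, ∀ x y z, θ x y z = f (L.br x y z)

theorem stmt1 {F : Type*} [Field F] {T V : Type*} [AddCommGroup T] [Module F T]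
    [AddCommGroup V] [Module F V] (L : LTS F T) (θ : T → T → T → V)
    (hθ : IsCocycle F L θ) (E : LTS F (T × V)) (hE : E.br = extBr F L θ) :
    AnnSet F E = {p : T × V | p.1 ∈ RadSet F θ ∩ AnnSet F L} := by
  ext p
  simp only [AnnSet, RadSet, Set.mem_setOf_eq, Set.mem_inter_iff, hE, extBr, Prod.mk_eq_zero]
  constructor
  · intro h
    exact ⟨fun y z => (h (y, 0) (z, 0)).2, fun y z => (h (y, 0) (z, 0)).1⟩
  · intro h q r
    exact ⟨h.2 q.1 r.1, h.1 q.1 r.1⟩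
end

section
/- Let T be a Lie triple system, V a vector space, and θ ∈ Z³(T,V). The extension T_θ is nilpotent if and only if T is nilpotent. -/
theorem stmt2 {F : Type*} [Field F] {T V : Type*} [AddCommGroup T] [Module F T]
    [AddCommGroup V] [Module F V] (L : LTS F T) (θ : T → T → T → V)
    (hθ : IsCocycle F L θ) (E : LTS F (T × V)) (hE : E.br = extBr F L θ) :
    IsNilpotentLTS F E ↔ IsNilpotentLTS F L := by
  have hbr0 : ∀ y z : T, L.br 0 y z = 0 := by
    intro y z
    have := L.add₁ 0 0 y z
    simpa using this.symm
  have hθ0 : ∀ y z : T, θ 0 y z = 0 := by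
    intro y z
    have := hθ.1.1 0 0 y z
    simp at this
    exact this
  have key : ∀ n, Submodule.map (LinearMap.fst F T V) (derSeq F E n) = derSeq F L n := by
    intro n
    induction n with
    | zero =>
      simp [derSeq, Submodule.map_top, LinearMap.range_eq_top.mpr LinearMap.fst_surjective]
    | succ n ih =>
      show Submodule.map (LinearMap.fst F T V)
        (Submodule.span F {w | ∃ a ∈ derSeq F E n, ∃ y z, w = E.br a y z}) = _
      rw [Submodule.map_span]
      congr 1
      ext b
      constructor
      · rintro ⟨w, ⟨a, ha, y, z, rfl⟩, rfl⟩
        refine ⟨a.1, ?_, y.1, z.1, ?_⟩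
        · rw [← ih]; exact ⟨a, ha, rfl⟩
        · simp [hE, extBr]
      · rintro ⟨c, hc, y, z, rfl⟩
        rw [← ih] at hc
        obtain ⟨a, ha, rfl⟩ := hc
        exact ⟨E.br a (y, 0) (z, 0), ⟨a, ha, (y, 0), (z, 0), rfl⟩, by simp [hE, extBr]⟩
  constructor
  · rintro ⟨m, hm⟩
    exact ⟨m, by rw [← key m, hm, Submodule.map_bot]⟩
  · rintro ⟨m, hm⟩
    refine ⟨m + 1, ?_⟩
    show Submodule.span F {w | ∃ a ∈ derSeq F E m, ∃ y z, w = E.br a y z} = ⊥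
    rw [eq_bot_iff, Submodule.span_le]
    rintro w ⟨a, ha, y, z, rfl⟩
    have ha1 : a.1 ∈ derSeq F L m := by rw [← key m]; exact ⟨a, ha, rfl⟩
    rw [hm] at ha1
    simp only [Submodule.mem_bot] at ha1
    simp [hE, extBr, ha1, hbr0, hθ0, Prod.ext_iff]
end

section
/- Let T be an n-dimensional Lie triple system with dim Ann(T) = m ≠ 0. Then there exists an (n−m)-dimensional Lie triple system T′ and a cocycle θ ∈ Z³(T′, Ann(T)) with Rad(θ) ∩ Ann(T′) = 0 such that T ≅ T′_θ and T / Ann(T) ≅ T′. -/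
/-- The annihilator of a Lie triple system, as a submodule. -/
def AnnSub (F : Type*) [Field F] {T : Type*} [AddCommGroup T] [Module F T]
    (L : LTS F T) : Submodule F T where
  carrier := {x | ∀ y z, L.br x y z = 0}
  add_mem' := by
    intro a b ha hb y z
    rw [L.add₁, ha, hb, add_zero]
  zero_mem' := by
    intro y z
    have h := L.smul₁ (0 : F) 0 y z
    simpa using h
  smul_mem' := by
    intro c a ha y z
    rw [L.smul₁, ha, smul_zero]


section StmtAux

variable {F : Type*} [Field F] {T : Type*} [AddCommGroup T] [Module F T]

namespace LTS
variable (L : LTS F T)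

lemma zero₁' (y z : T) : L.br 0 y z = 0 := by
  simpa using L.smul₁ (0 : F) 0 y z
lemma neg₁' (a y z : T) : L.br (-a) y z = -L.br a y z := by
  simpa [neg_one_smul] using L.smul₁ (-1 : F) a y z
lemma neg₂' (x a z : T) : L.br x (-a) z = -L.br x a z := by
  simpa [neg_one_smul] using L.smul₂ (-1 : F) x a z
lemma neg₃' (x y a : T) : L.br x y (-a) = -L.br x y a := by
  simpa [neg_one_smul] using L.smul₃ (-1 : F) x y a
lemma sub₁' (a b y z : T) : L.br (a - b) y z = L.br a y z - L.br b y z := by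
  rw [sub_eq_add_neg, L.add₁, L.neg₁', sub_eq_add_neg]
lemma sub₂' (x a b z : T) : L.br x (a - b) z = L.br x a z - L.br x b z := by
  rw [sub_eq_add_neg, L.add₂, L.neg₂', sub_eq_add_neg]
lemma sub₃' (x y a b : T) : L.br x y (a - b) = L.br x y a - L.br x y b := by
  rw [sub_eq_add_neg, L.add₃, L.neg₃', sub_eq_add_neg]
lemma swap' (u v x : T) : L.br v u x = -L.br u v x :=
  eq_neg_of_add_eq_zero_right (L.A1 u v x)

lemma annL {a : T} (ha : a ∈ AnnSub F L) (y z : T) : L.br a y z = 0 := ha y z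
lemma annM {a : T} (ha : a ∈ AnnSub F L) (y z : T) : L.br y a z = 0 := by
  have h := L.A1 a y z
  rw [L.annL ha] at h
  simpa using h
lemma annR {a : T} (ha : a ∈ AnnSub F L) (y z : T) : L.br y z a = 0 := by
  have h := L.A2 y z a
  rw [L.annM ha, L.annL ha] at h
  simpa using h

lemma keyB4 (u v x y z : T) :
    L.br u v (L.br x y z) + L.br (L.br v u x) y z + L.br x (L.br v u y) z
      + L.br x y (L.br v u z) = 0 := by
  rw [L.swap' u v x, L.swap' u v y, L.swap' u v z, L.neg₁', L.neg₂', L.neg₃', L.A3]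
  abel

end LTS

section Quot
variable {U V : Type*} [AddCommGroup U] [Module F U] [AddCommGroup V] [Module F V]
variable (L : LTS F T) (π : T →ₗ[F] U) (s : U →ₗ[F] T)
variable (hA : ∀ x : T, x - s (π x) ∈ AnnSub F L)

include hA in
lemma K1 (x y z : T) : L.br (s (π x)) y z = L.br x y z := by
  have h : L.br x y z - L.br (s (π x)) y z = 0 := by
    rw [← L.sub₁']; exact L.annL (hA x) y z
  exact (sub_eq_zero.mp h).symm

include hA in
lemma K2 (x y z : T) : L.br y (s (π x)) z = L.br y x z := by
  have h : L.br y x z - L.br y (s (π x)) z = 0 := by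
    rw [← L.sub₂']; exact L.annM (hA x) y z
  exact (sub_eq_zero.mp h).symm

include hA in
lemma K3 (x y z : T) : L.br y z (s (π x)) = L.br y z x := by
  have h : L.br y z x - L.br y z (s (π x)) = 0 := by
    rw [← L.sub₃']; exact L.annR (hA x) y z
  exact (sub_eq_zero.mp h).symm

def quotLTS (hA : ∀ x : T, x - s (π x) ∈ AnnSub F L) : LTS F U where
  br a b c := π (L.br (s a) (s b) (s c))
  add₁ := by intro a b y z; rw [map_add, L.add₁, map_add]
  smul₁ := by intro c a y z; rw [map_smul, L.smul₁, map_smul]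
  add₂ := by intro x a b z; rw [map_add, L.add₂, map_add]
  smul₂ := by intro c x a z; rw [map_smul, L.smul₂, map_smul]
  add₃ := by intro x y a b; rw [map_add, L.add₃, map_add]
  smul₃ := by intro c x y a; rw [map_smul, L.smul₃, map_smul]
  A1 := by intro x y z; rw [← map_add, L.A1, map_zero]
  A2 := by intro x y z; rw [← map_add, ← map_add, L.A2, map_zero]
  A3 := by
    intro u v x y z
    show π (L.br (s u) (s v) (s (π (L.br (s x) (s y) (s z))))) = _
    rw [K3 L π s hA, K1 L π s hA, K2 L π s hA, K3 L π s hA, L.A3, map_add, map_add]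

include hA in
lemma quot_cocycle (ρ : T →ₗ[F] V) :
    IsCocycle F (quotLTS L π s hA) (fun a b c => ρ (L.br (s a) (s b) (s c))) := by
  refine ⟨⟨?_, ?_, ?_, ?_, ?_, ?_⟩, ?_, ?_, ?_⟩
  · intro a b y z; dsimp only; rw [map_add, L.add₁, map_add]
  · intro c a y z; dsimp only; rw [map_smul, L.smul₁, map_smul]
  · intro x a b z; dsimp only; rw [map_add, L.add₂, map_add]
  · intro c x a z; dsimp only; rw [map_smul, L.smul₂, map_smul]
  · intro x y a b; dsimp only; rw [map_add, L.add₃, map_add]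
  · intro c x y a; dsimp only; rw [map_smul, L.smul₃, map_smul]
  · intro x y z; dsimp only; rw [← map_add, L.A1, map_zero]
  · intro x y z; dsimp only; rw [← map_add, ← map_add, L.A2, map_zero]
  · intro u v x y z
    dsimp only [quotLTS]
    show ρ (L.br (s u) (s v) (s (π (L.br (s x) (s y) (s z)))))
        + ρ (L.br (s (π (L.br (s v) (s u) (s x)))) (s y) (s z))
        + ρ (L.br (s x) (s (π (L.br (s v) (s u) (s y)))) (s z))
        + ρ (L.br (s x) (s y) (s (π (L.br (s v) (s u) (s z))))) = 0
    rw [K3 L π s hA, K1 L π s hA, K2 L π s hA, K3 L π s hA,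
      ← map_add, ← map_add, ← map_add, L.keyB4, map_zero]

end Quot

section Ext
variable {U V : Type*} [AddCommGroup U] [Module F U] [AddCommGroup V] [Module F V]

lemma tri_neg₁ {θ : U → U → U → V} (ht : Trilinear F θ) (a y z : U) :
    θ (-a) y z = -θ a y z := by
  simpa [neg_one_smul] using ht.2.1 (-1 : F) a y z
lemma tri_neg₂ {θ : U → U → U → V} (ht : Trilinear F θ) (x a z : U) :
    θ x (-a) z = -θ x a z := by
  simpa [neg_one_smul] using ht.2.2.2.1 (-1 : F) x a z
lemma tri_neg₃ {θ : U → U → U → V} (ht : Trilinear F θ) (x y a : U) :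
    θ x y (-a) = -θ x y a := by
  simpa [neg_one_smul] using ht.2.2.2.2.2 (-1 : F) x y a

lemma cocycle_B4' {L : LTS F U} {θ : U → U → U → V} (h : IsCocycle F L θ)
    (u v x y z : U) :
    θ u v (L.br x y z) =
      θ (L.br u v x) y z + θ x (L.br u v y) z + θ x y (L.br u v z) := by
  have h4 := h.2.2.2 u v x y z
  rw [L.swap' u v x, L.swap' u v y, L.swap' u v z, tri_neg₁ h.1, tri_neg₂ h.1,
    tri_neg₃ h.1] at h4
  rw [← sub_eq_zero, ← h4]
  abel

def extLTS (L : LTS F U) (θ : U → U → U → V) (h : IsCocycle F L θ) :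
    LTS F (U × V) where
  br := extBr F L θ
  add₁ := by
    intro a b y z
    exact Prod.ext (L.add₁ _ _ _ _) (h.1.1 _ _ _ _)
  smul₁ := by
    intro c a y z
    exact Prod.ext (L.smul₁ _ _ _ _) (h.1.2.1 _ _ _ _)
  add₂ := by
    intro x a b z
    exact Prod.ext (L.add₂ _ _ _ _) (h.1.2.2.1 _ _ _ _)
  smul₂ := by
    intro c x a z
    exact Prod.ext (L.smul₂ _ _ _ _) (h.1.2.2.2.1 _ _ _ _)
  add₃ := by
    intro x y a b
    exact Prod.ext (L.add₃ _ _ _ _) (h.1.2.2.2.2.1 _ _ _ _)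
  smul₃ := by
    intro c x y a
    exact Prod.ext (L.smul₃ _ _ _ _) (h.1.2.2.2.2.2 _ _ _ _)
  A1 := by
    intro x y z
    exact Prod.ext (L.A1 _ _ _) (h.2.1 _ _ _)
  A2 := by
    intro x y z
    exact Prod.ext (L.A2 _ _ _) (h.2.2.1 _ _ _)
  A3 := by
    intro u v x y z
    exact Prod.ext (L.A3 _ _ _ _ _) (cocycle_B4' h _ _ _ _ _)

end Ext

end StmtAux

theorem stmt3 {F : Type*} [Field F] {T : Type*} [AddCommGroup T] [Module F T]
    [FiniteDimensional F T] (L : LTS F T) (n m : ℕ)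
    (hn : Module.finrank F T = n) (hm : Module.finrank F (AnnSub F L) = m) (hm0 : m ≠ 0) :
    ∃ (L' : LTS F (Fin (n - m) → F))
      (θ : (Fin (n - m) → F) → (Fin (n - m) → F) → (Fin (n - m) → F) → AnnSub F L),
      IsCocycle F L' θ ∧
      RadSet F θ ∩ AnnSet F L' = {0} ∧
      (∃ E : LTS F ((Fin (n - m) → F) × AnnSub F L),
        E.br = extBr F L' θ ∧ LTSIso F L E) ∧
      (∃ π : T →ₗ[F] (Fin (n - m) → F), Function.Surjective π ∧
        (∀ x y z, π (L.br x y z) = L'.br (π x) (π y) (π z)) ∧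
        LinearMap.ker π = AnnSub F L) := by
  classical
  obtain ⟨W, hc⟩ := Submodule.exists_isCompl (AnnSub F L)
  have hfin : Module.finrank F W = n - m := by
    have h := Submodule.finrank_add_eq_of_isCompl hc
    rw [hm, hn] at h
    omega
  obtain ⟨e⟩ : Nonempty (W ≃ₗ[F] (Fin (n - m) → F)) :=
    FiniteDimensional.nonempty_linearEquiv_of_finrank_eq
      (by rw [hfin, Module.finrank_fin_fun])
  set pW : T →ₗ[F] W := W.projectionOnto (AnnSub F L) hc.symm with hpW
  set pA : T →ₗ[F] (AnnSub F L) := (AnnSub F L).projectionOnto W hc with hpA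
  set π : T →ₗ[F] (Fin (n - m) → F) := e.toLinearMap ∘ₗ pW with hπ
  set s : (Fin (n - m) → F) →ₗ[F] T := W.subtype ∘ₗ (e.symm.toLinearMap) with hsdef
  have hs : ∀ u, π (s u) = u := by
    intro u
    have h1 : pW ((e.symm u : W) : T) = e.symm u :=
      Submodule.projectionOnto_apply_left hc.symm (e.symm u)
    simp [hπ, hsdef, h1]
  have hsx : ∀ x : T, s (π x) = (pW x : T) := by
    intro x
    simp [hπ, hsdef]
  have hdecomp : ∀ x : T, ((pA x : T)) + ((pW x : T)) = x := fun x =>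
    Submodule.projection_add_projection_eq_self hc x
  have hA : ∀ x : T, x - s (π x) ∈ AnnSub F L := by
    intro x
    rw [hsx]
    have h : x - (pW x : T) = (pA x : T) := sub_eq_of_eq_add (hdecomp x).symm
    rw [h]
    exact (pA x).2
  have hπ0 : ∀ a ∈ AnnSub F L, π a = 0 := by
    intro a ha
    have : pW a = 0 := Submodule.projectionOnto_apply_of_mem_right hc.symm ha
    simp [hπ, this]
  have hker' : ∀ x : T, π x = 0 → x ∈ AnnSub F L := by
    intro x hx
    have h := hA x
    rw [hx, map_zero, sub_zero] at h
    exact h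
  have hzero : ∀ v : T, π v = 0 → pA v = 0 → v = 0 := by
    intro v h1 h2
    have h3 : pW v = 0 := by
      have : e (pW v) = 0 := h1
      simpa using congrArg e.symm this
    rw [← hdecomp v, h2, h3]
    simp
  refine ⟨quotLTS L π s hA, fun a b c => pA (L.br (s a) (s b) (s c)),
    quot_cocycle L π s hA pA, ?_, ?_, ?_⟩
  · ext x
    simp only [Set.mem_inter_iff, Set.mem_singleton_iff, RadSet, AnnSet,
      Set.mem_setOf_eq]
    constructor
    · rintro ⟨hrad, hann⟩
      have hbz : ∀ b c, L.br (s x) (s b) (s c) = 0 := by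
        intro b c
        exact hzero _ (hann b c) (hrad b c)
      have hx : s x ∈ AnnSub F L := by
        intro y z
        rw [← K2 L π s hA y (s x) z, ← K3 L π s hA z (s x) (s (π y))]
        exact hbz (π y) (π z)
      have h0 := hπ0 (s x) hx
      rw [hs x] at h0
      exact h0
    · rintro rfl
      constructor
      · intro y z
        show pA (L.br (s 0) (s y) (s z)) = 0
        rw [map_zero, L.zero₁', map_zero]
      · intro y z
        show π (L.br (s 0) (s y) (s z)) = 0
        rw [map_zero, L.zero₁', map_zero]
  · refine ⟨extLTS (quotLTS L π s hA) _ (quot_cocycle L π s hA pA), rfl, ?_⟩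
    refine ⟨LinearEquiv.ofLinear (LinearMap.prod π pA)
      (s ∘ₗ (LinearMap.fst F _ _) + (AnnSub F L).subtype ∘ₗ (LinearMap.snd F _ _))
      ?_ ?_, ?_⟩
    · apply LinearMap.ext
      rintro ⟨a, u⟩
      have h1 : π (s a + (u : T)) = a := by
        rw [map_add, hs, hπ0 _ u.2, add_zero]
      have h2 : pA (s a + (u : T)) = u := by
        have ha : pA (s a) = 0 := by
          simp [hpA, hsdef]
        rw [map_add, ha, zero_add]
        exact Submodule.projectionOnto_apply_left hc u
      simp only [LinearMap.coe_comp, Function.comp_apply, LinearMap.add_apply,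
        LinearMap.prod_apply, Function.prod, LinearMap.fst_apply, LinearMap.snd_apply,
        Submodule.coe_subtype, LinearMap.id_coe, id_eq]
      exact Prod.ext h1 h2
    · apply LinearMap.ext
      intro x
      simp only [LinearMap.coe_comp, Function.comp_apply, LinearMap.add_apply,
        LinearMap.prod_apply, Function.prod, LinearMap.fst_apply, LinearMap.snd_apply,
        Submodule.coe_subtype, LinearMap.id_coe, id_eq]
      rw [hsx, add_comm]
      exact hdecomp x
    · intro x y z
      refine Prod.ext ?_ ?_
      · show π (L.br x y z) = π (L.br (s (π x)) (s (π y)) (s (π z)))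
        rw [K1 L π s hA, K2 L π s hA, K3 L π s hA]
      · show pA (L.br x y z) = pA (L.br (s (π x)) (s (π y)) (s (π z)))
        rw [K1 L π s hA, K2 L π s hA, K3 L π s hA]
  · refine ⟨π, fun u => ⟨s u, hs u⟩, ?_, ?_⟩
    · intro x y z
      show π (L.br x y z) = π (L.br (s (π x)) (s (π y)) (s (π z)))
      rw [K1 L π s hA, K2 L π s hA, K3 L π s hA]
    · ext x
      constructor
      · intro hx
        exact hker' x hx
      · intro hx
        exact hπ0 x hx
end

section
/- Let T be a Lie triple system, V a vector space, and θ, ϑ ∈ Z³(T,V). If there exist φ ∈ Aut(T) and ψ ∈ GL(V) with [φθ] = [ψϑ] in H³(T,V), then T_θ ≅ T_ϑ. -/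
theorem stmt10 {F : Type*} [Field F] {T V : Type*} [AddCommGroup T] [Module F T]
    [AddCommGroup V] [Module F V] (L : LTS F T) (θ ϑ : T → T → T → V)
    (hθ : IsCocycle F L θ) (hϑ : IsCocycle F L ϑ)
    (φ : T ≃ₗ[F] T) (hφ : ∀ x y z, φ (L.br x y z) = L.br (φ x) (φ y) (φ z))
    (ψ : V ≃ₗ[F] V)
    (hcls : IsCoboundary F L (fun x y z => θ (φ x) (φ y) (φ z) - ψ (ϑ x y z)))
    (Eθ Eϑ : LTS F (T × V)) (h1 : Eθ.br = extBr F L θ) (h2 : Eϑ.br = extBr F L ϑ) :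
    LTSIso F Eθ Eϑ := by
  obtain ⟨f, hf⟩ := hcls
  refine ⟨{
    toFun := fun p => (φ.symm p.1, ψ.symm (p.2 - f (φ.symm p.1)))
    invFun := fun p => (φ p.1, ψ p.2 + f p.1)
    map_add' := by
      intro p q
      simp [Prod.ext_iff, map_add]
      abel
    map_smul' := by
      intro c p
      simp [Prod.ext_iff, map_smul, smul_sub]
    left_inv := by
      intro p
      simp [Prod.ext_iff]
    right_inv := by
      intro p
      simp [Prod.ext_iff] }, ?_⟩
  intro x y z
  simp only [h1, h2, extBr, LinearEquiv.coe_mk, Equiv.coe_fn_mk, Prod.ext_iff]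
  constructor
  · apply φ.injective
    simp [hφ]
  · apply ψ.injective
    have := hf (φ.symm x.1) (φ.symm y.1) (φ.symm z.1)
    simp only [LinearEquiv.apply_symm_apply] at this
    have h3 : φ.symm (L.br x.1 y.1 z.1) = L.br (φ.symm x.1) (φ.symm y.1) (φ.symm z.1) := by
      apply φ.injective; simp [hφ]
    simp only [LinearMap.coe_mk, AddHom.coe_mk]
    rw [h3]
    simp only [LinearEquiv.apply_symm_apply]
    linear_combination (norm := module) this
end

section
/- Let T be a Lie triple system, V a vector space, and θ, ϑ ∈ Z³(T,V) cocycles such that Ann(T_θ) = Ann(T_ϑ) = V (i.e., Rad ∩ Ann(T) = 0 for both). Then T_θ ≅ T_ϑ if and only if there exist φ ∈ Aut(T) and ψ ∈ GL(V) such that [φθ] = [ψϑ] in H³(T,V). -/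
section Helpers
variable {F : Type*} [Field F] {T V : Type*} [AddCommGroup T] [Module F T]
    [AddCommGroup V] [Module F V]

lemma br_zero₁ (L : LTS F T) (y z : T) : L.br 0 y z = 0 := by
  have := L.smul₁ 0 0 y z; simpa using this

lemma tri_zero₁ {θ : T → T → T → V} (h : Trilinear F θ) (y z : T) : θ 0 y z = 0 := by
  have := h.2.1 0 0 y z; simpa using this

/-- If `g` intertwines the extension brackets, the image of `{0} × V` stays in `{0} × V`. -/
lemma ann_first {L : LTS F T} {α β : T → T → T → V}
    (hα : Trilinear F α) (hβann : RadSet F β ∩ AnnSet F L = {0})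
    (g : (T × V) ≃ₗ[F] (T × V))
    (hg : ∀ p q r, g (extBr F L α p q r) = extBr F L β (g p) (g q) (g r))
    (v : V) : (g (0, v)).1 = 0 := by
  have key : ∀ y z : T, L.br (g (0, v)).1 y z = 0 ∧ β (g (0, v)).1 y z = 0 := by
    intro y z
    have h := hg (0, v) (g.symm (y, 0)) (g.symm (z, 0))
    have hL : extBr F L α (0, v) (g.symm (y, 0)) (g.symm (z, 0)) = 0 := by
      simp [extBr, br_zero₁, tri_zero₁ hα, Prod.ext_iff]
    rw [hL, map_zero, g.apply_symm_apply, g.apply_symm_apply] at h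
    have h2 := h.symm
    rw [extBr, Prod.ext_iff] at h2
    exact ⟨h2.1, h2.2⟩
  have hmem : (g (0, v)).1 ∈ RadSet F β ∩ AnnSet F L :=
    ⟨fun y z => (key y z).2, fun y z => (key y z).1⟩
  rw [hβann] at hmem
  exact hmem
end Helpers

theorem stmt11 {F : Type*} [Field F] {T V : Type*} [AddCommGroup T] [Module F T]
    [AddCommGroup V] [Module F V] (L : LTS F T) (θ ϑ : T → T → T → V)
    (hθ : IsCocycle F L θ) (hϑ : IsCocycle F L ϑ)
    (hθann : RadSet F θ ∩ AnnSet F L = {0}) (hϑann : RadSet F ϑ ∩ AnnSet F L = {0})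
    (Eθ Eϑ : LTS F (T × V)) (h1 : Eθ.br = extBr F L θ) (h2 : Eϑ.br = extBr F L ϑ) :
    LTSIso F Eθ Eϑ ↔
      ∃ (φ : T ≃ₗ[F] T) (ψ : V ≃ₗ[F] V),
        (∀ x y z, φ (L.br x y z) = L.br (φ x) (φ y) (φ z)) ∧
        IsCoboundary F L (fun x y z => θ (φ x) (φ y) (φ z) - ψ (ϑ x y z)) := by
  constructor
  · rintro ⟨e, he⟩
    rw [h1, h2] at he
    have hg : ∀ p q r, e.symm (extBr F L ϑ p q r)
        = extBr F L θ (e.symm p) (e.symm q) (e.symm r) := by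
      intro p q r
      apply e.injective
      rw [e.apply_symm_apply, he, e.apply_symm_apply, e.apply_symm_apply, e.apply_symm_apply]
    set g := e.symm with hgdef
    have hg0 : ∀ v : V, (g (0, v)).1 = 0 := fun v => ann_first hϑ.1 hθann g hg v
    have he0 : ∀ v : V, (e (0, v)).1 = 0 := fun v => ann_first hθ.1 hϑann e he v
    let φl : T →ₗ[F] T := (LinearMap.fst F T V) ∘ₗ g.toLinearMap ∘ₗ (LinearMap.inl F T V)
    let fl : T →ₗ[F] V := (LinearMap.snd F T V) ∘ₗ g.toLinearMap ∘ₗ (LinearMap.inl F T V)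
    let ψl : V →ₗ[F] V := (LinearMap.snd F T V) ∘ₗ g.toLinearMap ∘ₗ (LinearMap.inr F T V)
    have hφl : ∀ x : T, φl x = (g (x, 0)).1 := fun x => rfl
    have hfl : ∀ x : T, fl x = (g (x, 0)).2 := fun x => rfl
    have hψl : ∀ v : V, ψl v = (g (0, v)).2 := fun v => rfl
    have hφinj : Function.Injective φl := by
      rw [injective_iff_map_eq_zero]
      intro x hx
      rw [hφl] at hx
      have hx2 : g (x, 0) = (0, (g (x, 0)).2) := by
        rw [Prod.ext_iff]; exact ⟨hx, rfl⟩
      have : (x, (0 : V)) = e (0, (g (x, 0)).2) := by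
        rw [← hx2, hgdef, e.apply_symm_apply]
      have hx1 : x = (e (0, (g (x, 0)).2)).1 := congrArg Prod.fst this
      rw [he0] at hx1
      exact hx1
    have hφsurj : Function.Surjective φl := by
      intro y
      refine ⟨(e (y, 0)).1, ?_⟩
      have hsplit : ((e (y, 0)).1, (0 : V))
          = (e (y, 0) : T × V) - (0, (e (y, 0)).2) := by
        rw [Prod.ext_iff]; constructor <;> simp
      rw [hφl, hsplit, map_sub]
      have h3 : g (e (y, 0)) = (y, 0) := e.symm_apply_apply _
      rw [h3]
      simp [hg0]
    have hψinj : Function.Injective ψl := by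
      rw [injective_iff_map_eq_zero]
      intro v hv
      rw [hψl] at hv
      have : g (0, v) = 0 := by
        rw [Prod.ext_iff]; exact ⟨hg0 v, hv⟩
      have := g.injective (by rw [this, map_zero] : g (0, v) = g 0)
      exact (Prod.ext_iff.mp this).2
    have hψsurj : Function.Surjective ψl := by
      intro w
      refine ⟨(e (0, w)).2, ?_⟩
      have h4 : ((0 : T), (e (0, w)).2) = e (0, w) := by
        rw [Prod.ext_iff]; exact ⟨(he0 w).symm, rfl⟩
      rw [hψl, h4, hgdef, e.symm_apply_apply]
    have hmain : ∀ x y z : T,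
        φl (L.br x y z) = L.br (φl x) (φl y) (φl z) ∧
        fl (L.br x y z) + ψl (ϑ x y z) = θ (φl x) (φl y) (φl z) := by
      intro x y z
      have h5 := hg (x, 0) (y, 0) (z, 0)
      have hsplit : extBr F L ϑ (x, 0) (y, 0) (z, 0)
          = ((L.br x y z, (0 : V)) : T × V) + (0, ϑ x y z) := by
        rw [extBr, Prod.ext_iff]; constructor <;> simp
      rw [hsplit, map_add] at h5
      rw [extBr, Prod.ext_iff] at h5
      obtain ⟨h51, h52⟩ := h5
      simp only [Prod.fst_add, Prod.snd_add] at h51 h52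
      constructor
      · rw [hφl, hφl, hφl, hφl] at *
        rw [← h51, hg0, add_zero]
      · rw [hfl, hψl, hφl, hφl, hφl]
        exact h52
    refine ⟨LinearEquiv.ofBijective φl ⟨hφinj, hφsurj⟩,
      LinearEquiv.ofBijective ψl ⟨hψinj, hψsurj⟩, ?_, fl, ?_⟩
    · intro x y z
      exact (hmain x y z).1
    · intro x y z
      have := (hmain x y z).2
      simp only [LinearEquiv.ofBijective_apply]
      show θ (φl x) (φl y) (φl z) - ψl (ϑ x y z) = fl (L.br x y z)
      rw [← this]
      abel
  · rintro ⟨φ, ψ, hφ, f, hf⟩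
    have hφsymm : ∀ x y z : T,
        φ.symm (L.br x y z) = L.br (φ.symm x) (φ.symm y) (φ.symm z) := by
      intro x y z
      apply φ.injective
      rw [φ.apply_symm_apply, hφ, φ.apply_symm_apply, φ.apply_symm_apply, φ.apply_symm_apply]
    let A : T × V →ₗ[F] T × V :=
      LinearMap.prod (φ.symm.toLinearMap ∘ₗ LinearMap.fst F T V)
        (ψ.symm.toLinearMap ∘ₗ (LinearMap.snd F T V
          - f ∘ₗ φ.symm.toLinearMap ∘ₗ LinearMap.fst F T V))
    let B : T × V →ₗ[F] T × V :=
      LinearMap.prod (φ.toLinearMap ∘ₗ LinearMap.fst F T V)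
        (ψ.toLinearMap ∘ₗ LinearMap.snd F T V + f ∘ₗ LinearMap.fst F T V)
    have hAapp : ∀ p : T × V, A p = (φ.symm p.1, ψ.symm (p.2 - f (φ.symm p.1))) := by
      intro p; rfl
    have hBapp : ∀ p : T × V, B p = (φ p.1, ψ p.2 + f p.1) := by
      intro p; rfl
    have hAB : A ∘ₗ B = LinearMap.id := by
      apply LinearMap.ext
      intro p
      simp [hAapp, hBapp]
    have hBA : B ∘ₗ A = LinearMap.id := by
      apply LinearMap.ext
      intro p
      simp [hAapp, hBapp]
    refine ⟨LinearEquiv.ofLinear A B hAB hBA, ?_⟩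
    intro p q r
    rw [h1, h2]
    show A (extBr F L θ p q r) = extBr F L ϑ (A p) (A q) (A r)
    obtain ⟨x, a⟩ := p; obtain ⟨y, b⟩ := q; obtain ⟨z, c⟩ := r
    rw [hAapp, hAapp, hAapp, hAapp]
    rw [extBr, extBr, Prod.ext_iff]
    refine ⟨hφsymm x y z, ?_⟩
    simp only
    have h6 := hf (φ.symm x) (φ.symm y) (φ.symm z)
    simp only [φ.apply_symm_apply] at h6
    apply ψ.injective
    rw [ψ.apply_symm_apply, hφsymm, ← h6]
    abel
end

section
/- Every nilpotent Lie triple system of dimension at most 2 over a field of characteristic ≠ 2 is abelian (i.e., its triple product is identically zero). -/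
-- Auxiliary lemmas

lemma lts_br_zero₁ {F : Type*} [Field F] {T : Type*} [AddCommGroup T] [Module F T]
    (L : LTS F T) (y z : T) : L.br 0 y z = 0 := by
  have := L.smul₁ 0 0 y z
  simpa using this

lemma lts_alt {F : Type*} [Field F] (h2 : (2 : F) ≠ 0) {T : Type*} [AddCommGroup T]
    [Module F T] (L : LTS F T) (u z : T) : L.br u u z = 0 := by
  have h := L.A1 u u z
  have h' : (2 : F) • L.br u u z = 0 := by
    rw [two_smul]; exact h
  rcases smul_eq_zero.mp h' with hc | hv
  · exact absurd hc h2
  · exact hv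

lemma derSeq_succ_eq {F : Type*} [Field F] {T : Type*} [AddCommGroup T] [Module F T]
    (L : LTS F T) (n : ℕ) :
    derSeq F L (n + 1) =
      Submodule.span F {w | ∃ a ∈ derSeq F L n, ∃ y z : T, w = L.br a y z} := rfl

lemma derSeq_stab {F : Type*} [Field F] {T : Type*} [AddCommGroup T] [Module F T]
    (L : LTS F T) (n : ℕ) (h : derSeq F L (n + 1) = derSeq F L n) :
    ∀ k, derSeq F L (n + k) = derSeq F L n := by
  intro k
  induction k with
  | zero => rfl
  | succ k ih =>
    have : n + (k + 1) = (n + k) + 1 := by omega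
    rw [this, derSeq_succ_eq, ih, ← derSeq_succ_eq, h]

theorem stmt12 {F : Type*} [Field F] (h2 : (2 : F) ≠ 0)
    {T : Type*} [AddCommGroup T] [Module F T] [FiniteDimensional F T]
    (hd : Module.finrank F T ≤ 2) (L : LTS F T) (hnil : IsNilpotentLTS F L) :
    ∀ x y z, L.br x y z = 0 := by
  by_contra hne
  push_neg at hne
  obtain ⟨x0, y0, z0, h0⟩ := hne
  have hAlt : ∀ u z, L.br u u z = 0 := lts_alt h2 L
  -- membership of any bracket in derSeq 1
  have hmem1 : ∀ x y z : T, L.br x y z ∈ derSeq F L 1 := by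
    intro x y z
    rw [derSeq_succ_eq]
    exact Submodule.subset_span ⟨x, Submodule.mem_top, y, z, rfl⟩
  -- derSeq 1 ≠ ⊤
  have hne_top : derSeq F L 1 ≠ ⊤ := by
    intro htop
    have hall : ∀ k, derSeq F L k = derSeq F L 0 := by
      have h10 : derSeq F L (0 + 1) = derSeq F L 0 := by
        show derSeq F L 1 = ⊤; exact htop
      intro k
      have := derSeq_stab L 0 h10 k
      simpa using this
    obtain ⟨m, hm⟩ := hnil
    have : (⊤ : Submodule F T) = ⊥ := by
      have := hall m
      rw [hm] at this
      exact this.symm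
    exact h0 ((Submodule.eq_bot_iff _).mp this _ Submodule.mem_top)
  -- derSeq 1 ≠ ⊥
  have hne_bot : derSeq F L 1 ≠ ⊥ := by
    intro hbot
    exact h0 ((Submodule.eq_bot_iff _).mp hbot _ (hmem1 x0 y0 z0))
  -- pick w ≠ 0 in derSeq 1
  obtain ⟨w, hwmem, hw0⟩ := (Submodule.ne_bot_iff _).mp hne_bot
  -- finrank (derSeq 1) ≤ 1, so derSeq 1 = span {w}
  have hfr : Module.finrank F (derSeq F L 1) ≤ 1 := by
    have := Submodule.finrank_lt (K := F) (V := T) hne_top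
    omega
  have hspan : derSeq F L 1 = Submodule.span F {w} := by
    symm
    apply Submodule.eq_of_le_of_finrank_le
    · rw [Submodule.span_le, Set.singleton_subset_iff]; exact hwmem
    · rw [finrank_span_singleton hw0]; exact hfr
  -- derSeq 2 ≤ derSeq 1
  have h21 : derSeq F L 2 ≤ derSeq F L 1 := by
    rw [derSeq_succ_eq, derSeq_succ_eq]
    apply Submodule.span_mono
    rintro v ⟨a, _, y, z, rfl⟩
    exact ⟨a, Submodule.mem_top, y, z, rfl⟩
  -- w annihilates in the first slot
  have hwann : ∀ y z : T, L.br w y z = 0 := by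
    by_contra hc
    push_neg at hc
    obtain ⟨y, z, hyz⟩ := hc
    have hmem2 : L.br w y z ∈ derSeq F L 2 := by
      rw [derSeq_succ_eq]
      exact Submodule.subset_span ⟨w, hwmem, y, z, rfl⟩
    have hmemspan : L.br w y z ∈ Submodule.span F {w} := by
      rw [← hspan]; exact h21 hmem2
    obtain ⟨c, hcw⟩ := Submodule.mem_span_singleton.mp hmemspan
    have hcne : c ≠ 0 := by
      rintro rfl; rw [zero_smul] at hcw; exact hyz hcw.symm
    have hwin2 : w ∈ derSeq F L 2 := by
      have : w = c⁻¹ • L.br w y z := by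
        rw [← hcw, smul_smul, inv_mul_cancel₀ hcne, one_smul]
      rw [this]
      exact Submodule.smul_mem _ _ hmem2
    have heq21 : derSeq F L (1 + 1) = derSeq F L 1 := by
      apply le_antisymm h21
      rw [hspan, Submodule.span_le, Set.singleton_subset_iff]
      exact hwin2
    obtain ⟨m, hm⟩ := hnil
    rcases m with _ | k
    · have : (⊤ : Submodule F T) = ⊥ := hm
      exact h0 ((Submodule.eq_bot_iff _).mp this _ Submodule.mem_top)
    · have := derSeq_stab L 1 heq21 k
      rw [show 1 + k = k + 1 by omega, hm] at this
      rw [hspan] at this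
      have : w = 0 := by
        have hmem : w ∈ (⊥ : Submodule F T) := by
          rw [this]; exact Submodule.mem_span_singleton_self w
        simpa using hmem
      exact hw0 this
  -- w annihilates in the second slot
  have hwann2 : ∀ x z : T, L.br x w z = 0 := by
    intro x z
    have := L.A1 w x z
    rw [hwann x z] at this
    simpa using this
  -- three vectors in a ≤ 2-dimensional space are dependent
  have hdep : ¬ LinearIndependent F ![x0, y0, w] := by
    intro hli
    have := hli.fintype_card_le_finrank
    simp [Fintype.card_fin] at this
    omega
  obtain ⟨g, hsum, i, hi⟩ := Fintype.not_linearIndependent_iff.mp hdep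
  rw [Fin.sum_univ_three] at hsum
  simp only [Matrix.cons_val_zero, Matrix.cons_val_one, Matrix.head_cons,
    Matrix.cons_val_two, Matrix.tail_cons] at hsum
  -- case analysis on which coefficient is nonzero
  by_cases hg0 : g 0 ≠ 0
  · have hx : g 0 • x0 = (-g 1) • y0 + (-g 2) • w := by
      rw [neg_smul, neg_smul]
      linear_combination (norm := module) hsum
    have : g 0 • L.br x0 y0 z0 = 0 := by
      rw [← L.smul₁, hx, L.add₁, L.smul₁, L.smul₁, hAlt, hwann, smul_zero, smul_zero,
        add_zero]
    rcases smul_eq_zero.mp this with hc | hv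
    · exact hg0 hc
    · exact h0 hv
  · push_neg at hg0
    by_cases hg1 : g 1 ≠ 0
    · have hy : g 1 • y0 = (-g 2) • w := by
        rw [neg_smul]
        rw [hg0, zero_smul, zero_add] at hsum
        linear_combination (norm := module) hsum
      have : g 1 • L.br x0 y0 z0 = 0 := by
        rw [← L.smul₂, hy, L.smul₂, hwann2, smul_zero]
      rcases smul_eq_zero.mp this with hc | hv
      · exact hg1 hc
      · exact h0 hv
    · push_neg at hg1
      have hg2 : g 2 ≠ 0 := by
        fin_cases i <;> simp_all
      rw [hg0, hg1, zero_smul, zero_smul, zero_add, zero_add] at hsum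
      rcases smul_eq_zero.mp hsum with hc | hv
      · exact hg2 hc
      · exact hw0 hv
end

section
/- For each λ in an algebraically closed field F of characteristic ≠ 2,3, the 4-dimensional space with basis e₁,e₂,e₃,e₄ and products [e₁,e₂,e₃] = −(λ+1)e₄, [e₂,e₃,e₁] = λe₄, [e₃,e₁,e₂] = e₄ (together with the products forced by skew-symmetry in the first two arguments, all other basic products zero) is a nilpotent Lie triple system T_{4,6}^λ; moreover, for λ with λ²+λ ≠ 0, the map ξ(λ) = (λ²+λ+1)³ / (λ²(λ+1)²) satisfies: T_{4,6}^α ≅ T_{4,6}^β if and only if ξ(α) = ξ(β). -/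
/-- The bracket of the family `T₄,₆^λ` on `F⁴`:
`[e₁,e₂,e₃] = -(λ+1)e₄`, `[e₂,e₃,e₁] = λe₄`, `[e₃,e₁,e₂] = e₄`,
extended trilinearly with the skew-symmetries forced by (A1). -/
def brFam (F : Type*) [Field F] (l : F) :
    (Fin 4 → F) → (Fin 4 → F) → (Fin 4 → F) → (Fin 4 → F) :=
  fun x y z =>
    ((-(l + 1)) * (x 0 * y 1 - x 1 * y 0) * z 2
      + l * (x 1 * y 2 - x 2 * y 1) * z 0
      + (x 2 * y 0 - x 0 * y 2) * z 1) • (fun i => if i = 3 then (1 : F) else 0)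

def bv (F : Type*) [Field F] (j : Fin 4) : Fin 4 → F := fun i => if i = j then 1 else 0

lemma bv_apply (F : Type*) [Field F] (j i : Fin 4) : bv F j i = if i = j then 1 else 0 := rfl

def sc (F : Type*) [Field F] (l : F) (x y z : Fin 4 → F) : F :=
  (-(l + 1)) * (x 0 * y 1 - x 1 * y 0) * z 2
    + l * (x 1 * y 2 - x 2 * y 1) * z 0
    + (x 2 * y 0 - x 0 * y 2) * z 1

lemma brFam_eq (F : Type*) [Field F] (l : F) (x y z : Fin 4 → F) :
    brFam F l x y z = sc F l x y z • bv F 3 := rfl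

def mkIso (F : Type*) [Field F] (σ : Equiv.Perm (Fin 4)) (d : Fin 4 → F)
    (hd : ∀ i, d i ≠ 0) : (Fin 4 → F) ≃ₗ[F] (Fin 4 → F) where
  toFun v := fun i => d i * v (σ i)
  invFun w := fun i => (d (σ.symm i))⁻¹ * w (σ.symm i)
  map_add' u v := by funext i; simp [mul_add]
  map_smul' t v := by funext i; simp; ring
  left_inv v := by
    funext i
    simp only [Equiv.apply_symm_apply]
    rw [← mul_assoc, inv_mul_cancel₀ (hd _), one_mul]
  right_inv w := by
    funext i
    simp only [Equiv.symm_apply_apply]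
    rw [← mul_assoc, mul_inv_cancel₀ (hd _), one_mul]

lemma mkIso_apply (F : Type*) [Field F] (σ : Equiv.Perm (Fin 4)) (d : Fin 4 → F)
    (hd : ∀ i, d i ≠ 0) (v : Fin 4 → F) (i : Fin 4) :
    mkIso F σ d hd v i = d i * v (σ i) := rfl

lemma mkIso_bv3 (F : Type*) [Field F] (σ : Equiv.Perm (Fin 4)) (d : Fin 4 → F)
    (hd : ∀ i, d i ≠ 0) (hσ3 : σ 3 = 3) (k : F) :
    mkIso F σ d hd (k • bv F 3) = (d 3 * k) • bv F 3 := by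
  funext i
  show d i * ((k • bv F 3) (σ i)) = ((d 3 * k) • bv F 3) i
  simp only [Pi.smul_apply, smul_eq_mul, bv_apply]
  by_cases hi : i = 3
  · subst hi; rw [hσ3]; simp [mul_assoc]
  · have h2 : σ i ≠ 3 := fun h => hi (σ.injective (h.trans hσ3.symm))
    simp [hi, h2]

lemma fin00 : ((0:Fin 4) = 0) = True := by simp
lemma fin01 : ((0:Fin 4) = 1) = False := by simp
lemma fin02 : ((0:Fin 4) = 2) = False := by simp
lemma fin03 : ((0:Fin 4) = 3) = False := by simp
lemma fin10 : ((1:Fin 4) = 0) = False := by simp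
lemma fin11 : ((1:Fin 4) = 1) = True := by simp
lemma fin12 : ((1:Fin 4) = 2) = False := by simp
lemma fin13 : ((1:Fin 4) = 3) = False := by simp
lemma fin20 : ((2:Fin 4) = 0) = False := by simp
lemma fin21 : ((2:Fin 4) = 1) = False := by simp
lemma fin22 : ((2:Fin 4) = 2) = True := by simp
lemma fin23 : ((2:Fin 4) = 3) = False := by simp
lemma fin30 : ((3:Fin 4) = 0) = False := by simp
lemma fin31 : ((3:Fin 4) = 1) = False := by simp
lemma fin32 : ((3:Fin 4) = 2) = False := by simp
lemma fin33 : ((3:Fin 4) = 3) = True := by simp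

def famLTS (F : Type*) [Field F] (l : F) : LTS F (Fin 4 → F) where
  br := brFam F l
  add₁ := by intros; funext i; by_cases hi : i = 3 <;> simp [brFam, hi] <;> try ring
  smul₁ := by intros; funext i; by_cases hi : i = 3 <;> simp [brFam, hi] <;> try ring
  add₂ := by intros; funext i; by_cases hi : i = 3 <;> simp [brFam, hi] <;> try ring
  smul₂ := by intros; funext i; by_cases hi : i = 3 <;> simp [brFam, hi] <;> try ring
  add₃ := by intros; funext i; by_cases hi : i = 3 <;> simp [brFam, hi] <;> try ring
  smul₃ := by intros; funext i; by_cases hi : i = 3 <;> simp [brFam, hi] <;> try ring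
  A1 := by intros; funext i; by_cases hi : i = 3 <;> simp [brFam, hi] <;> try ring
  A2 := by intros; funext i; by_cases hi : i = 3 <;> simp [brFam, hi] <;> try ring
  A3 := by intros; funext i; by_cases hi : i = 3 <;> simp [brFam, hi] <;> try ring

def Kmod (F : Type*) [Field F] : Submodule F (Fin 4 → F) where
  carrier := {v | v 0 = 0 ∧ v 1 = 0 ∧ v 2 = 0}
  add_mem' := by
    rintro a b ⟨ha0, ha1, ha2⟩ ⟨hb0, hb1, hb2⟩
    exact ⟨by simp [ha0, hb0], by simp [ha1, hb1], by simp [ha2, hb2]⟩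
  zero_mem' := ⟨rfl, rfl, rfl⟩
  smul_mem' := by
    rintro c a ⟨ha0, ha1, ha2⟩
    exact ⟨by simp [ha0], by simp [ha1], by simp [ha2]⟩

lemma famLTS_nilpotent (F : Type*) [Field F] (l : F) : IsNilpotentLTS F (famLTS F l) := by
  refine ⟨2, ?_⟩
  have hK : derSeq F (famLTS F l) 1 ≤ Kmod F := by
    have h1 : derSeq F (famLTS F l) 1
        = Submodule.span F {w | ∃ a ∈ derSeq F (famLTS F l) 0, ∃ y z, w = (famLTS F l).br a y z} :=
      rfl
    rw [h1, Submodule.span_le]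
    rintro w ⟨a, _, y, z, rfl⟩
    refine ⟨?_, ?_, ?_⟩ <;> simp [famLTS, brFam]
  have h2 : derSeq F (famLTS F l) 2
      = Submodule.span F {w | ∃ a ∈ derSeq F (famLTS F l) 1, ∃ y z, w = (famLTS F l).br a y z} :=
    rfl
  rw [h2, eq_bot_iff, Submodule.span_le]
  rintro w ⟨a, ha, y, z, rfl⟩
  obtain ⟨h0, h1', h2'⟩ := hK ha
  simp only [SetLike.mem_coe, Submodule.mem_bot]
  show brFam F l a y z = 0
  funext i
  simp [brFam, h0, h1', h2']

lemma isoFam {F : Type*} [Field F] {α β : F} {Lα Lβ : LTS F (Fin 4 → F)}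
    (hLa : Lα.br = brFam F α) (hLb : Lβ.br = brFam F β)
    (σ : Equiv.Perm (Fin 4)) (hσ3 : σ 3 = 3) (d : Fin 4 → F) (hd : ∀ i, d i ≠ 0)
    (hkey : ∀ x y z : Fin 4 → F, d 3 * sc F α x y z
      = sc F β (fun m => d m * x (σ m)) (fun m => d m * y (σ m)) (fun m => d m * z (σ m))) :
    LTSIso F Lα Lβ := by
  refine ⟨mkIso F σ d hd, fun x y z => ?_⟩
  rw [hLa, hLb]
  rw [show brFam F α x y z = sc F α x y z • bv F 3 from rfl]
  rw [mkIso_bv3 F σ d hd hσ3, hkey x y z]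
  rfl



lemma backwardIso {F : Type*} [Field F] {α β : F}
    (hA : α ^ 2 + α ≠ 0) (hB : β ^ 2 + β ≠ 0)
    {Lα Lβ : LTS F (Fin 4 → F)} (hLa : Lα.br = brFam F α) (hLb : Lβ.br = brFam F β)
    (hξ : (α ^ 2 + α + 1) ^ 3 / (α ^ 2 * (α + 1) ^ 2)
      = (β ^ 2 + β + 1) ^ 3 / (β ^ 2 * (β + 1) ^ 2)) :
    LTSIso F Lα Lβ := by
  have ha0 : α ≠ 0 := fun h => hA (by rw [h]; ring)
  have ha1 : α + 1 ≠ 0 := fun h => hA (by rw [eq_neg_of_add_eq_zero_left h]; ring)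
  have hb0 : β ≠ 0 := fun h => hB (by rw [h]; ring)
  have hb1 : β + 1 ≠ 0 := fun h => hB (by rw [eq_neg_of_add_eq_zero_left h]; ring)
  have dA : α ^ 2 * (α + 1) ^ 2 ≠ 0 :=
    mul_ne_zero (pow_ne_zero _ ha0) (pow_ne_zero _ ha1)
  have dB : β ^ 2 * (β + 1) ^ 2 ≠ 0 :=
    mul_ne_zero (pow_ne_zero _ hb0) (pow_ne_zero _ hb1)
  rw [div_eq_div_iff dA dB] at hξ
  have hprod : (β - α) * ((α * β - 1) * ((α + β + 1) * ((α * β + β + 1)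
      * ((α * β + α + β) * (α * β + α + 1))))) = 0 := by
    linear_combination (-1 : F) * hξ
  rcases mul_eq_zero.mp hprod with h | hrest
  · -- β = α
    apply isoFam hLa hLb (1 : Equiv.Perm (Fin 4)) (by decide) (fun _ => (1:F))
    · intro i; simp
    · intro x y z
      simp only [sc, Equiv.Perm.coe_one, id_eq, one_mul]
      linear_combination (x 0 * y 1 * z 2 - x 1 * y 0 * z 2 - x 1 * y 2 * z 0 + x 2 * y 1 * z 0) * h
  rcases mul_eq_zero.mp hrest with h | hrest
  · -- α β = 1
    apply isoFam hLa hLb (Equiv.swap (0 : Fin 4) 1) (by decide)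
      (fun i => if i = 3 then -β else 1)
    · intro i; fin_cases i <;> simp [hb0]
    · intro x y z
      have s0 : (Equiv.swap (0 : Fin 4) 1) 0 = 1 := by decide
      have s1 : (Equiv.swap (0 : Fin 4) 1) 1 = 0 := by decide
      have s2 : (Equiv.swap (0 : Fin 4) 1) 2 = 2 := by decide
      simp only [sc, s0, s1, s2, fin03, fin13, fin23, fin33, if_true, if_false, one_mul, mul_one]
      linear_combination (x 0 * y 1 * z 2 - x 1 * y 0 * z 2 - x 1 * y 2 * z 0 + x 2 * y 1 * z 0) * h
  rcases mul_eq_zero.mp hrest with h | hrest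
  · -- α + β + 1 = 0
    apply isoFam hLa hLb (Equiv.swap (0 : Fin 4) 2) (by decide)
      (fun i => if i = 3 then (-1 : F) else 1)
    · intro i; fin_cases i <;> simp
    · intro x y z
      have s0 : (Equiv.swap (0 : Fin 4) 2) 0 = 2 := by decide
      have s1 : (Equiv.swap (0 : Fin 4) 2) 1 = 1 := by decide
      have s2 : (Equiv.swap (0 : Fin 4) 2) 2 = 0 := by decide
      simp only [sc, s0, s1, s2, fin03, fin13, fin23, fin33, if_true, if_false, one_mul, mul_one]
      linear_combination (x 0 * y 1 * z 2 - x 1 * y 0 * z 2 - x 1 * y 2 * z 0 + x 2 * y 1 * z 0) * h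
  rcases mul_eq_zero.mp hrest with h | hrest
  · -- α β + β + 1 = 0
    apply isoFam hLa hLb (Equiv.swap (0 : Fin 4) 1 * Equiv.swap (1 : Fin 4) 2) (by decide)
      (fun i => if i = 3 then β else 1)
    · intro i; fin_cases i <;> simp [hb0]
    · intro x y z
      have s0 : (Equiv.swap (0 : Fin 4) 1 * Equiv.swap (1 : Fin 4) 2) 0 = 1 := by decide
      have s1 : (Equiv.swap (0 : Fin 4) 1 * Equiv.swap (1 : Fin 4) 2) 1 = 2 := by decide
      have s2 : (Equiv.swap (0 : Fin 4) 1 * Equiv.swap (1 : Fin 4) 2) 2 = 0 := by decide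
      simp only [sc, s0, s1, s2, fin03, fin13, fin23, fin33, if_true, if_false, one_mul, mul_one]
      linear_combination (-(x 0 * y 1 * z 2) + x 1 * y 0 * z 2 + x 1 * y 2 * z 0 - x 2 * y 1 * z 0) * h
  rcases mul_eq_zero.mp hrest with h | h
  · -- α β + α + β = 0
    apply isoFam hLa hLb (Equiv.swap (1 : Fin 4) 2) (by decide)
      (fun i => if i = 0 then α + 1 else 1)
    · intro i; fin_cases i <;> simp [ha1]
    · intro x y z
      have s0 : (Equiv.swap (1 : Fin 4) 2) 0 = 0 := by decide
      have s1 : (Equiv.swap (1 : Fin 4) 2) 1 = 2 := by decide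
      have s2 : (Equiv.swap (1 : Fin 4) 2) 2 = 1 := by decide
      simp only [sc, s0, s1, s2, fin00, fin10, fin20, fin30, if_true, if_false, one_mul, mul_one]
      linear_combination (x 0 * y 2 * z 1 + x 1 * y 2 * z 0 - x 2 * y 0 * z 1 - x 2 * y 1 * z 0) * h
  · -- α β + α + 1 = 0
    apply isoFam hLa hLb (Equiv.swap (1 : Fin 4) 2 * Equiv.swap (0 : Fin 4) 1) (by decide)
      (fun i => if i = 0 then α else 1)
    · intro i; fin_cases i <;> simp [ha0]
    · intro x y z
      have s0 : (Equiv.swap (1 : Fin 4) 2 * Equiv.swap (0 : Fin 4) 1) 0 = 2 := by decide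
      have s1 : (Equiv.swap (1 : Fin 4) 2 * Equiv.swap (0 : Fin 4) 1) 1 = 0 := by decide
      have s2 : (Equiv.swap (1 : Fin 4) 2 * Equiv.swap (0 : Fin 4) 1) 2 = 1 := by decide
      simp only [sc, s0, s1, s2, fin00, fin10, fin20, fin30, if_true, if_false, one_mul, mul_one]
      linear_combination (-(x 0 * y 1 * z 2) - x 0 * y 2 * z 1 + x 1 * y 0 * z 2 + x 2 * y 0 * z 1) * h

set_option maxHeartbeats 1000000 in
lemma forwardXi {F : Type*} [Field F] (h2 : (2 : F) ≠ 0) {α β : F}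
    (hA : α ^ 2 + α ≠ 0) (hB : β ^ 2 + β ≠ 0)
    {Lα Lβ : LTS F (Fin 4 → F)} (hLa : Lα.br = brFam F α) (hLb : Lβ.br = brFam F β)
    (hiso : LTSIso F Lα Lβ) :
    (α ^ 2 + α + 1) ^ 3 / (α ^ 2 * (α + 1) ^ 2)
      = (β ^ 2 + β + 1) ^ 3 / (β ^ 2 * (β + 1) ^ 2) := by
  obtain ⟨e, he⟩ := hiso
  simp only [hLa, hLb] at he
  have harg : brFam F α (bv F 2) (bv F 0) (bv F 1) = bv F 3 := by
    funext i
    simp [brFam, bv_apply]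
  have hχ0 : e (bv F 3) = sc F β (e (bv F 2)) (e (bv F 0)) (e (bv F 1)) • bv F 3 := by
    have h := he (bv F 2) (bv F 0) (bv F 1)
    rw [harg] at h
    exact h
  obtain ⟨c, hχ⟩ : ∃ c : F, e (bv F 3) = c • bv F 3 := ⟨_, hχ0⟩
  have hc : c ≠ 0 := by
    intro h0
    have hb3 : (bv F 3 : Fin 4 → F) = 0 := by
      apply e.map_eq_zero_iff.mp
      rw [hχ, h0, zero_smul]
    have := congrFun hb3 3
    simp [bv_apply] at this
  have key : ∀ x y z : Fin 4 → F, sc F β (e x) (e y) (e z) = c * sc F α x y z := by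
    intro x y z
    have h := he x y z
    rw [brFam_eq, map_smul, hχ, smul_smul, brFam_eq] at h
    have h3 := congrFun h 3
    simp only [Pi.smul_apply, bv_apply, smul_eq_mul, fin33, if_true, mul_one] at h3
    linear_combination -h3
  have E00 := key (bv F 1) (bv F 2) (bv F 0)
  have E01 := key (bv F 1) (bv F 2) (bv F 1)
  have E02 := key (bv F 1) (bv F 2) (bv F 2)
  have E10 := key (bv F 2) (bv F 0) (bv F 0)
  have E11 := key (bv F 2) (bv F 0) (bv F 1)
  have E12 := key (bv F 2) (bv F 0) (bv F 2)
  have E20 := key (bv F 0) (bv F 1) (bv F 0)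
  have E21 := key (bv F 0) (bv F 1) (bv F 1)
  have E22 := key (bv F 0) (bv F 1) (bv F 2)
  simp only [sc, bv_apply, fin00, fin01, fin02, fin03, fin10, fin11, fin12, fin13, fin20, fin21, fin22, fin23, fin30, fin31, fin32, fin33, if_true, if_false] at E00 E01 E02 E10 E11 E12 E20 E21 E22
  norm_num at E00 E01 E02 E10 E11 E12 E20 E21 E22
  set Mα : Matrix (Fin 3) (Fin 3) F := !![α, 0, 0; 0, 1, 0; 0, 0, -(α+1)] with hMα
  set Mβ : Matrix (Fin 3) (Fin 3) F := !![β, 0, 0; 0, 1, 0; 0, 0, -(β+1)] with hMβ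
  set Pm : Matrix (Fin 3) (Fin 3) F :=
    !![e (bv F 0) 0, e (bv F 1) 0, e (bv F 2) 0;
       e (bv F 0) 1, e (bv F 1) 1, e (bv F 2) 1;
       e (bv F 0) 2, e (bv F 1) 2, e (bv F 2) 2] with hPm
  have hM : Pm.adjugate * Mβ * Pm = c • Mα := by
    ext i j
    fin_cases i <;> fin_cases j <;>
      (rw [hPm, hMα, hMβ, Matrix.adjugate_fin_three]
       simp [Matrix.mul_apply, Fin.sum_univ_three, Matrix.smul_apply, smul_eq_mul,
         Matrix.vecHead, Matrix.vecTail])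
    · linear_combination E00
    · linear_combination E01
    · linear_combination E02
    · linear_combination E10
    · linear_combination E11
    · linear_combination E12
    · linear_combination E20
    · linear_combination E21
    · linear_combination E22
  set d : F := Pm.det with hd
  have hda : Mα.det = -(α ^ 2 + α) := by
    rw [hMα]; rw [Matrix.det_fin_three]; simp; ring
  have hdb : Mβ.det = -(β ^ 2 + β) := by
    rw [hMβ]; rw [Matrix.det_fin_three]; simp; ring
  have hdet := congrArg Matrix.det hM
  rw [Matrix.det_mul, Matrix.det_mul, Matrix.det_adjugate, Matrix.det_smul, hda, hdb] at hdet
  norm_num [Fintype.card_fin] at hdet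
  -- hdet : d ^ 2 * -(β^2+β) * d = c ^ 3 * -(α^2+α)  (roughly)
  have eq2 : c ^ 3 * (α ^ 2 + α) = d ^ 3 * (β ^ 2 + β) := by linear_combination hdet
  have hdne : d ≠ 0 := by
    intro h0
    rw [h0] at eq2
    exact mul_ne_zero (pow_ne_zero 3 hc) hA (by linear_combination eq2)
  -- trace identity
  have hsq : Pm.adjugate * Mβ * (Pm * Pm.adjugate) * Mβ * Pm = (c • Mα) * (c • Mα) := by
    rw [← hM]
    simp only [Matrix.mul_assoc]
  rw [Matrix.mul_adjugate] at hsq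
  have htr := congrArg Matrix.trace hsq
  simp only [Matrix.mul_smul, Matrix.smul_mul, Matrix.mul_one, smul_smul, Matrix.trace_smul,
    smul_eq_mul] at htr
  -- htr : d * trace (adjP * Mβ * Mβ * Pm)-ish = c * c * trace (Mα * Mα)
  have hcyc : Matrix.trace (Pm.adjugate * Mβ * Mβ * Pm) = d * Matrix.trace (Mβ * Mβ) := by
    rw [show Pm.adjugate * Mβ * Mβ * Pm = Pm.adjugate * (Mβ * Mβ * Pm) by
          simp only [Matrix.mul_assoc],
        Matrix.trace_mul_comm,
        show Mβ * Mβ * Pm * Pm.adjugate = Mβ * Mβ * (Pm * Pm.adjugate) by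
          simp only [Matrix.mul_assoc],
        Matrix.mul_adjugate, Matrix.mul_smul, Matrix.mul_one, Matrix.trace_smul, smul_eq_mul]
  have hta : Matrix.trace (Mα * Mα) = α ^ 2 + 1 + (α + 1) ^ 2 := by
    rw [hMα]; simp [Matrix.trace_fin_three, Matrix.mul_apply, Fin.sum_univ_three]; ring
  have htb : Matrix.trace (Mβ * Mβ) = β ^ 2 + 1 + (β + 1) ^ 2 := by
    rw [hMβ]; simp [Matrix.trace_fin_three, Matrix.mul_apply, Fin.sum_univ_three]; ring
  rw [hcyc, hta, htb] at htr
  have eq1 : c ^ 2 * (α ^ 2 + α + 1) = d ^ 2 * (β ^ 2 + β + 1) := by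
    apply mul_left_cancel₀ h2
    linear_combination -htr
  -- conclude
  have dA : α ^ 2 * (α + 1) ^ 2 ≠ 0 := by
    have : α ^ 2 * (α + 1) ^ 2 = (α ^ 2 + α) ^ 2 := by ring
    rw [this]; exact pow_ne_zero 2 hA
  have dB : β ^ 2 * (β + 1) ^ 2 ≠ 0 := by
    have : β ^ 2 * (β + 1) ^ 2 = (β ^ 2 + β) ^ 2 := by ring
    rw [this]; exact pow_ne_zero 2 hB
  rw [div_eq_div_iff dA dB]
  apply mul_left_cancel₀ (show (c ^ 6 * d ^ 6 : F) ≠ 0 from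
    mul_ne_zero (pow_ne_zero _ hc) (pow_ne_zero _ hdne))
  linear_combination
    (d ^ 6 * (β ^ 2 + β) ^ 2 * (c ^ 4 * (α ^ 2 + α + 1) ^ 2
        + c ^ 2 * d ^ 2 * (α ^ 2 + α + 1) * (β ^ 2 + β + 1)
        + d ^ 4 * (β ^ 2 + β + 1) ^ 2)) * eq1
    - (d ^ 6 * (β ^ 2 + β + 1) ^ 3 * (c ^ 3 * (α ^ 2 + α) + d ^ 3 * (β ^ 2 + β))) * eq2

theorem stmt14 {F : Type*} [Field F] [IsAlgClosed F]
    (h2 : (2 : F) ≠ 0) (h3 : (3 : F) ≠ 0) :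
    (∀ l : F, ∃ L : LTS F (Fin 4 → F), L.br = brFam F l ∧ IsNilpotentLTS F L) ∧
    (∀ α β : F, α ^ 2 + α ≠ 0 → β ^ 2 + β ≠ 0 →
      ∀ Lα Lβ : LTS F (Fin 4 → F), Lα.br = brFam F α → Lβ.br = brFam F β →
        (LTSIso F Lα Lβ ↔
          (α ^ 2 + α + 1) ^ 3 / (α ^ 2 * (α + 1) ^ 2)
            = (β ^ 2 + β + 1) ^ 3 / (β ^ 2 * (β + 1) ^ 2))) := by
  constructor
  · intro l
    exact ⟨famLTS F l, rfl, famLTS_nilpotent F l⟩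
  · intro α β hA hB Lα Lβ hLa hLb
    exact ⟨fun hiso => forwardXi h2 hA hB hLa hLb hiso,
           fun hξ => backwardIso hA hB hLa hLb hξ⟩
end
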